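/- An algebraic theory 𝒯 has enough points if for all t, t' ∈ 𝒯(n), t⟨c⟩ = t'⟨c⟩ for every tuple of constants c ∈ 𝒯(0)^n implies t = t'. Every λ-theory ℒ admits a map of λ-theories, injective in every component, into some λ-theory with enough points. -/

import Mathlib

open CategoryTheory Limits

/-- An algebraic theory (abstract clone / cartesian operad): sets of `n`-ary
operations with projections (variables) and substitution. Renaming along
`f : Fin n → Fin m` is derived as substitution along projections. -/
structure AlgTheory where
  carrier : ℕ → Type
  pr : ∀ {n : ℕ}, Fin n → carrier n
  subst : ∀ {n m : ℕ}, carrier n → (Fin n → carrier m) → carrier m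
  pr_subst : ∀ {n m : ℕ} (i : Fin n) (s : Fin n → carrier m), subst (pr i) s = s i
  subst_pr : ∀ {n : ℕ} (t : carrier n), subst t pr = t
  subst_assoc : ∀ {n m k : ℕ} (t : carrier n) (s : Fin n → carrier m) (r : Fin m → carrier k),
    subst (subst t s) r = subst t fun i => subst (s i) r

/-- Renaming (the functorial action on `Fin n`), derived from substitution. -/
def AlgTheory.rename (T : AlgTheory) {n m : ℕ} (f : Fin n → Fin m) (t : T.carrier n) :
    T.carrier m :=
  T.subst t fun i => T.pr (f i)
/-- Given a substitution tuple `s : T(m)^n`, the tuple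
`s⁺ : T(m+1)^(n+1)` consisting of the components of `s` weakened along
`Fin m ↪ Fin (m+1)` followed by the last projection. -/
def AlgTheory.lift (T : AlgTheory) {n m : ℕ} (s : Fin n → T.carrier m) :
    Fin (n + 1) → T.carrier (m + 1) :=
  Fin.lastCases (T.pr (Fin.last m)) fun i => T.rename Fin.castSucc (s i)

/-- A λ-theory: an algebraic theory with semi-closed structure, i.e. natural
retractions of `ℒ(n)` onto `ℒ(n+1)` (retraction `ρ`, section `λ` = `abs`),
compatible with substitution. -/
structure LambdaTheory extends AlgTheory where
  rho : ∀ {n : ℕ}, carrier n → carrier (n + 1)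
  abs : ∀ {n : ℕ}, carrier (n + 1) → carrier n
  rho_abs : ∀ {n : ℕ} (u : carrier (n + 1)), rho (abs u) = u
  rho_subst : ∀ {n m : ℕ} (t : carrier n) (s : Fin n → carrier m),
    subst (rho t) (AlgTheory.lift toAlgTheory s) = rho (subst t s)
  abs_subst : ∀ {n m : ℕ} (u : carrier (n + 1)) (s : Fin n → carrier m),
    subst (abs u) s = abs (subst u (AlgTheory.lift toAlgTheory s))

/-- The binary application operation `app = ρ(pr₁) ∈ ℒ(2)`. -/
def LambdaTheory.appOp (L : LambdaTheory) : L.carrier 2 := L.rho (L.pr 0)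

/-- The constant `𝕒 = λ(λ(app)) ∈ ℒ(0)`. -/
def LambdaTheory.appConst (L : LambdaTheory) : L.carrier 0 := L.abs (L.abs L.appOp)
/-- A map of algebraic theories: a family of maps preserving projections and
substitution (hence also renaming). -/
structure TheoryHom (S T : AlgTheory) where
  app : ∀ {n : ℕ}, S.carrier n → T.carrier n
  map_pr : ∀ {n : ℕ} (i : Fin n), app (S.pr i) = T.pr i
  map_subst : ∀ {n m : ℕ} (t : S.carrier n) (s : Fin n → S.carrier m),
    app (S.subst t s) = T.subst (app t) fun i => app (s i)
/-- A map of λ-theories: a map of the underlying algebraic theories commuting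
with the retractions `ρ` and the sections `λ`. -/
structure LambdaTheoryHom (L M : LambdaTheory) extends
    TheoryHom L.toAlgTheory M.toAlgTheory where
  map_rho : ∀ {n : ℕ} (t : L.carrier n), app (L.rho t) = M.rho (app t)
  map_abs : ∀ {n : ℕ} (u : L.carrier (n + 1)), app (L.abs u) = M.abs (app u)

/-- An algebraic theory has enough points when equality of operations is
reflected by their action on tuples of constants. -/
def AlgTheory.HasEnoughPoints (T : AlgTheory) : Prop :=
  ∀ (n : ℕ) (t t' : T.carrier n),
    (∀ c : Fin n → T.carrier 0, T.subst t c = T.subst t' c) → t = t'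

section AuxTheory

variable (T : AlgTheory)

lemma subst_rename {a b c : ℕ} (f : Fin a → Fin b) (t : T.carrier a) (σ : Fin b → T.carrier c) :
    T.subst (T.rename f t) σ = T.subst t fun i => σ (f i) := by
  unfold AlgTheory.rename
  rw [T.subst_assoc]
  simp [T.pr_subst]

lemma rename_subst {a b c : ℕ} (f : Fin b → Fin c) (t : T.carrier a) (σ : Fin a → T.carrier b) :
    T.rename f (T.subst t σ) = T.subst t fun i => T.rename f (σ i) := by
  unfold AlgTheory.rename
  rw [T.subst_assoc]

lemma rename_pr {a b : ℕ} (f : Fin a → Fin b) (i : Fin a) :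
    T.rename f (T.pr i) = T.pr (f i) := by
  unfold AlgTheory.rename; rw [T.pr_subst]

lemma rename_rename {a b c : ℕ} (f : Fin a → Fin b) (g : Fin b → Fin c) (t : T.carrier a) :
    T.rename g (T.rename f t) = T.rename (fun i => g (f i)) t := by
  unfold AlgTheory.rename
  rw [T.subst_assoc]
  simp [T.pr_subst]

lemma rename_ext {a b : ℕ} {f g : Fin a → Fin b} (h : ∀ i, f i = g i) (t : T.carrier a) :
    T.rename f t = T.rename g t := by
  unfold AlgTheory.rename
  congr 1
  funext i
  rw [h]

lemma rename_id {a : ℕ} {f : Fin a → Fin a} (h : ∀ i, f i = i) (t : T.carrier a) :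
    T.rename f t = t := by
  unfold AlgTheory.rename
  have : (fun i => T.pr (f i)) = T.pr := funext fun i => by rw [h]
  rw [this, T.subst_pr]

lemma lift_dite {a b : ℕ} (s : Fin a → T.carrier b) (q : Fin (a + 1)) :
    AlgTheory.lift T s q =
      if h : q.1 < a then T.rename Fin.castSucc (s ⟨q.1, h⟩) else T.pr (Fin.last b) := by
  induction q using Fin.lastCases with
  | last => simp [AlgTheory.lift]
  | cast i => simp [AlgTheory.lift, i.isLt, Fin.eta]

/-- the canonical extension of `f : Fin a → Fin b` to one more variable. -/
def extendD {a b : ℕ} (f : Fin a → Fin b) : Fin (a + 1) → Fin (b + 1) :=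
  fun q => if h : q.1 < a then ⟨(f ⟨q.1, h⟩).1, by have := (f ⟨q.1, h⟩).isLt; omega⟩
           else ⟨b, by omega⟩

lemma lift_pr_comp {a b : ℕ} (f : Fin a → Fin b) :
    AlgTheory.lift T (fun i => T.pr (f i)) = fun q => T.pr (extendD f q) := by
  funext q
  rw [lift_dite]
  unfold extendD
  split_ifs with h
  · rw [rename_pr]
    congr 1
  · congr 1

end AuxTheory

section LamAux

variable (L : LambdaTheory)

lemma rho_rename {a b : ℕ} (f : Fin a → Fin b) (t : L.carrier a) :
    L.rho (L.toAlgTheory.rename f t) = L.toAlgTheory.rename (extendD f) (L.rho t) := by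
  have h1 : L.toAlgTheory.rename (extendD f) (L.rho t)
      = L.toAlgTheory.subst (L.rho t)
          (AlgTheory.lift L.toAlgTheory fun i => L.toAlgTheory.pr (f i)) := by
    rw [lift_pr_comp]; rfl
  rw [h1, L.rho_subst]; rfl

lemma abs_rename {a b : ℕ} (f : Fin a → Fin b) (u : L.carrier (a + 1)) :
    L.toAlgTheory.rename f (L.abs u) = L.abs (L.toAlgTheory.rename (extendD f) u) := by
  have h1 : L.toAlgTheory.rename f (L.abs u)
      = L.toAlgTheory.subst (L.abs u) (fun i => L.toAlgTheory.pr (f i)) := rfl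
  rw [h1, L.abs_subst, lift_pr_comp]; rfl

/-- a closed dummy term, weakened to any context. -/
def dum (m : ℕ) : L.carrier m := L.toAlgTheory.subst L.appConst Fin.elim0

lemma rename_inj {a b : ℕ} {f : Fin a → Fin b} (hf : Function.Injective f) :
    Function.Injective (fun t : L.carrier a => L.toAlgTheory.rename f t) := by
  intro t t' h
  simp only at h
  cases a with
  | zero =>
    have key : ∀ x : L.carrier 0,
        L.toAlgTheory.subst (L.toAlgTheory.rename f x) (fun _ => dum L 0) = x := by
      intro x
      rw [subst_rename]
      have h2 : (fun i : Fin 0 => (fun _ : Fin b => dum L 0) (f i)) = L.toAlgTheory.pr :=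
        funext fun i => i.elim0
      rw [h2, L.subst_pr]
    rw [← key t, ← key t', h]
  | succ a' =>
    obtain ⟨g, hg⟩ := hf.hasLeftInverse
    have key : ∀ x : L.carrier (a' + 1),
        L.toAlgTheory.rename g (L.toAlgTheory.rename f x) = x := by
      intro x
      rw [rename_rename]
      exact rename_id _ hg x
    rw [← key t, ← key t', h]

end LamAux
section Colim

variable (L : LambdaTheory)

/-- single weakening: add a fresh variable at the end. -/
def wk {m : ℕ} (t : L.carrier m) : L.carrier (m + 1) :=
  L.toAlgTheory.rename Fin.castSucc t

lemma wk_inj {m : ℕ} : Function.Injective (wk L (m := m)) :=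
  rename_inj L (Fin.castSucc_injective m)

lemma wk_pr {m : ℕ} (p : Fin m) : wk L (L.toAlgTheory.pr p) = L.toAlgTheory.pr ⟨p.1, by omega⟩ := by
  unfold wk
  rw [rename_pr]
  congr 1

/-- iterated weakening. -/
def upN {n : ℕ} : ∀ (j : ℕ) {k : ℕ}, L.carrier (n + k) → L.carrier (n + (k + j))
  | 0, _, t => t
  | j + 1, _, t => wk L (upN j t)

lemma upN_inj {n k : ℕ} (j : ℕ) : Function.Injective (upN L (n := n) j (k := k)) := by
  induction j with
  | zero => exact fun a b h => h
  | succ j ih => exact fun a b h => ih (wk_inj L h)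

/-- elements of arity `n` at some stage of the colimit. -/
def S (n : ℕ) : Type := Σ k : ℕ, L.carrier (n + k)

lemma sEq_snd {n a : ℕ} {x y : L.carrier (n + a)} (h : (⟨a, x⟩ : S L n) = ⟨a, y⟩) : x = y := by
  cases h
  rfl

lemma sEq_congr {n : ℕ} {a b : ℕ} {x : L.carrier (n + a)} {y : L.carrier (n + b)}
    (j : ℕ) (h : (⟨a, x⟩ : S L n) = ⟨b, y⟩) :
    (⟨a + j, upN L j x⟩ : S L n) = ⟨b + j, upN L j y⟩ :=
  congrArg (fun p : S L n => (⟨p.1 + j, upN L j p.2⟩ : S L n)) h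

lemma upN_reindex {n k : ℕ} {a b : ℕ} (e : a = b) (x : L.carrier (n + k)) :
    (⟨k + a, upN L a x⟩ : S L n) = ⟨k + b, upN L b x⟩ :=
  congrArg (fun c : ℕ => (⟨k + c, upN L c x⟩ : S L n)) e

lemma upN_add {n k : ℕ} (a b : ℕ) (x : L.carrier (n + k)) :
    (⟨k + (a + b), upN L (a + b) x⟩ : S L n) = ⟨(k + a) + b, upN L b (upN L a x)⟩ := by
  induction b with
  | zero => rfl
  | succ b ih =>
    have := congrArg (fun p : S L n => (⟨p.1 + 1, wk L p.2⟩ : S L n)) ih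
    exact this

lemma sigma_cancel {n a b : ℕ} (j : ℕ) {x : L.carrier (n + a)} {y : L.carrier (n + b)}
    (h : (⟨a + j, upN L j x⟩ : S L n) = ⟨b + j, upN L j y⟩) :
    (⟨a, x⟩ : S L n) = ⟨b, y⟩ := by
  have e : a + j = b + j := congrArg Sigma.fst h
  have e2 : a = b := by omega
  subst e2
  have : upN L j x = upN L j y := sEq_snd L h
  rw [upN_inj L j this]

instance setoidS (n : ℕ) : Setoid (S L n) where
  r a b := ∃ j j', (⟨a.1 + j, upN L j a.2⟩ : S L n) = ⟨b.1 + j', upN L j' b.2⟩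
  iseqv := by
    constructor
    · exact fun a => ⟨0, 0, rfl⟩
    · rintro a b ⟨j, j', h⟩; exact ⟨j', j, h.symm⟩
    · rintro a b c ⟨j, j', h1⟩ ⟨p, p', h2⟩
      refine ⟨j + p, p' + j', ?_⟩
      calc (⟨a.1 + (j + p), upN L (j + p) a.2⟩ : S L n)
          = ⟨(a.1 + j) + p, upN L p (upN L j a.2)⟩ := upN_add L j p a.2
        _ = ⟨(b.1 + j') + p, upN L p (upN L j' b.2)⟩ := sEq_congr L p h1
        _ = ⟨b.1 + (j' + p), upN L (j' + p) b.2⟩ := (upN_add L j' p b.2).symm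
        _ = ⟨b.1 + (p + j'), upN L (p + j') b.2⟩ := upN_reindex L (by omega) b.2
        _ = ⟨(b.1 + p) + j', upN L j' (upN L p b.2)⟩ := upN_add L p j' b.2
        _ = ⟨(c.1 + p') + j', upN L j' (upN L p' c.2)⟩ := sEq_congr L j' h2
        _ = ⟨c.1 + (p' + j'), upN L (p' + j') c.2⟩ := (upN_add L p' j' c.2).symm

/-- the carrier of the colimit theory. -/
def Mc (n : ℕ) : Type := Quotient (setoidS L n)

def ofStage {n : ℕ} (k : ℕ) (t : L.carrier (n + k)) : Mc L n :=
  Quotient.mk (setoidS L n) ⟨k, t⟩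

lemma ofStage_wk {n k : ℕ} (t : L.carrier (n + k)) :
    ofStage L (k + 1) (wk L t) = ofStage L k t :=
  Quotient.sound ⟨0, 1, rfl⟩

lemma ofStage_upN {n k : ℕ} (j : ℕ) (t : L.carrier (n + k)) :
    ofStage L (k + j) (upN L j t) = ofStage L k t := by
  induction j with
  | zero => rfl
  | succ j ih =>
    have : ofStage L ((k + j) + 1) (wk L (upN L j t)) = ofStage L (k + j) (upN L j t) :=
      ofStage_wk L _
    exact this.trans ih

lemma ofStage_exact {n : ℕ} {K₁ K₂ : ℕ} {x : L.carrier (n + K₁)} {y : L.carrier (n + K₂)}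
    (J₁ J₂ : ℕ) (hK : K₁ + J₁ = K₂ + J₂)
    (h : ofStage L K₁ x = ofStage L K₂ y) :
    (⟨K₁ + J₁, upN L J₁ x⟩ : S L n) = ⟨K₂ + J₂, upN L J₂ y⟩ := by
  obtain ⟨j, j', hs⟩ := Quotient.exact h
  have hfst : K₁ + j = K₂ + j' := congrArg Sigma.fst hs
  apply sigma_cancel L (j + j')
  calc (⟨(K₁ + J₁) + (j + j'), upN L (j + j') (upN L J₁ x)⟩ : S L n)
      = ⟨K₁ + (J₁ + (j + j')), upN L (J₁ + (j + j')) x⟩ := (upN_add L J₁ (j + j') x).symm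
    _ = ⟨K₁ + (j + (J₁ + j')), upN L (j + (J₁ + j')) x⟩ := upN_reindex L (by omega) x
    _ = ⟨(K₁ + j) + (J₁ + j'), upN L (J₁ + j') (upN L j x)⟩ := upN_add L j (J₁ + j') x
    _ = ⟨(K₂ + j') + (J₁ + j'), upN L (J₁ + j') (upN L j' y)⟩ := sEq_congr L (J₁ + j') hs
    _ = ⟨K₂ + (j' + (J₁ + j')), upN L (j' + (J₁ + j')) y⟩ := (upN_add L j' (J₁ + j') y).symm
    _ = ⟨K₂ + (J₂ + (j + j')), upN L (J₂ + (j + j')) y⟩ := upN_reindex L (by omega) y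
    _ = ⟨(K₂ + J₂) + (j + j'), upN L (j + j') (upN L J₂ y)⟩ := upN_add L J₂ (j + j') y

lemma ofStage_inj {n K : ℕ} {x y : L.carrier (n + K)}
    (h : ofStage L K x = ofStage L K y) : x = y :=
  sEq_snd L (ofStage_exact L 0 0 rfl h)

/-- push to a given later stage. -/
def upTo {n k K : ℕ} (h : k ≤ K) (t : L.carrier (n + k)) : L.carrier (n + K) :=
  cast (by rw [Nat.add_sub_cancel' h] : L.carrier (n + (k + (K - k))) = L.carrier (n + K))
    (upN L (K - k) t)

lemma ofStage_cast {n : ℕ} {a b : ℕ} (e : a = b)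
    (hc : L.carrier (n + a) = L.carrier (n + b)) (x : L.carrier (n + a)) :
    ofStage L b (cast hc x) = ofStage L a x := by
  subst e
  exact congrArg (ofStage L a) (eq_of_heq (cast_heq hc x))

lemma ofStage_upTo {n k K : ℕ} (h : k ≤ K) (t : L.carrier (n + k)) :
    ofStage L K (upTo L h t) = ofStage L k t := by
  unfold upTo
  rw [ofStage_cast L (by omega : k + (K - k) = K)]
  exact ofStage_upN L (K - k) t

lemma exists_rep {n : ℕ} (x : Mc L n) : ∃ k t, x = ofStage L k t :=
  ⟨x.out.1, x.out.2, (Quotient.out_eq x).symm⟩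

end Colim
section Ops

variable (L : LambdaTheory)

/-- extend a substitution tuple at a fixed stage to the polynomial-theory substitution
which fixes all the fresh variables. -/
def polyExt {n m K : ℕ} (u : Fin n → L.carrier (m + K)) : Fin (n + K) → L.carrier (m + K) :=
  fun q => if h : q.1 < n then u ⟨q.1, h⟩
           else L.toAlgTheory.pr ⟨m + (q.1 - n), by have := q.isLt; omega⟩

def polySubst {n m K : ℕ} (t : L.carrier (n + K)) (u : Fin n → L.carrier (m + K)) :
    L.carrier (m + K) :=
  L.toAlgTheory.subst t (polyExt L u)

lemma polySubst_wk {n m K : ℕ} (t : L.carrier (n + K)) (u : Fin n → L.carrier (m + K)) :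
    polySubst L (n := n) (m := m) (K := K + 1) (wk L t) (fun i => wk L (u i))
      = wk L (polySubst L t u) := by
  unfold polySubst wk
  rw [subst_rename, rename_subst]
  congr 1
  funext q
  unfold polyExt
  have hval : (Fin.castSucc q).1 = q.1 := rfl
  by_cases h : q.1 < n
  · rw [dif_pos (by omega : (Fin.castSucc q).1 < n), dif_pos h]
    rfl
  · rw [dif_neg (by omega : ¬ (Fin.castSucc q).1 < n), dif_neg h, rename_pr]
    congr 1

lemma polySubst_upN {n m K : ℕ} (j : ℕ) (t : L.carrier (n + K)) (u : Fin n → L.carrier (m + K)) :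
    polySubst L (n := n) (m := m) (K := K + j) (upN L j t) (fun i => upN L j (u i))
      = upN L j (polySubst L t u) := by
  induction j with
  | zero => rfl
  | succ j ih =>
    show polySubst L (n := n) (m := m) (K := (K + j) + 1) (wk L (upN L j t))
        (fun i => wk L (upN L j (u i))) = wk L (upN L j (polySubst L t u))
    rw [polySubst_wk, ih]

lemma polySubst_sigma {n m : ℕ} {K₁ K₂ : ℕ} {t₁ : L.carrier (n + K₁)} {t₂ : L.carrier (n + K₂)}
    {u₁ : Fin n → L.carrier (m + K₁)} {u₂ : Fin n → L.carrier (m + K₂)}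
    (ht : (⟨K₁, t₁⟩ : S L n) = ⟨K₂, t₂⟩)
    (hu : ∀ i, (⟨K₁, u₁ i⟩ : S L m) = ⟨K₂, u₂ i⟩) :
    ofStage L K₁ (polySubst L t₁ u₁) = ofStage L K₂ (polySubst L t₂ u₂) := by
  have e : K₁ = K₂ := congrArg Sigma.fst ht
  subst e
  have ht2 : t₁ = t₂ := sEq_snd L ht
  have hu2 : u₁ = u₂ := funext fun i => sEq_snd L (hu i)
  rw [ht2, hu2]

lemma polySubst_WD {n m : ℕ} {K₁ K₂ : ℕ} {t₁ : L.carrier (n + K₁)} {t₂ : L.carrier (n + K₂)}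
    {u₁ : Fin n → L.carrier (m + K₁)} {u₂ : Fin n → L.carrier (m + K₂)}
    (ht : ofStage L K₁ t₁ = ofStage L K₂ t₂)
    (hu : ∀ i, ofStage L K₁ (u₁ i) = ofStage L K₂ (u₂ i)) :
    ofStage L K₁ (polySubst L t₁ u₁) = ofStage L K₂ (polySubst L t₂ u₂) := by
  have h1 : ofStage L K₁ (polySubst L t₁ u₁)
      = ofStage L (K₁ + K₂) (polySubst L (upN L K₂ t₁) (fun i => upN L K₂ (u₁ i))) := by
    rw [polySubst_upN, ofStage_upN]
  have h2 : ofStage L K₂ (polySubst L t₂ u₂)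
      = ofStage L (K₂ + K₁) (polySubst L (upN L K₁ t₂) (fun i => upN L K₁ (u₂ i))) := by
    rw [polySubst_upN, ofStage_upN]
  rw [h1, h2]
  exact polySubst_sigma L (ofStage_exact L K₂ K₁ (by omega) ht)
    (fun i => ofStage_exact L K₂ K₁ (by omega) (hu i))

/-- substitution in the colimit theory. -/
noncomputable def substM {n m : ℕ} (x : Mc L n) (s : Fin n → Mc L m) : Mc L m :=
  ofStage L (max x.out.1 (Finset.univ.sup fun i => (s i).out.1))
    (polySubst L (upTo L (le_max_left _ _) x.out.2)
      (fun i => upTo L ((Finset.le_sup (Finset.mem_univ i)).trans (le_max_right _ _)) (s i).out.2))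

lemma substM_ofStage {n m K : ℕ} (t : L.carrier (n + K)) (u : Fin n → L.carrier (m + K)) :
    substM L (ofStage L K t) (fun i => ofStage L K (u i)) = ofStage L K (polySubst L t u) := by
  unfold substM
  apply polySubst_WD
  · rw [ofStage_upTo]
    exact Quotient.out_eq _
  · intro i
    rw [ofStage_upTo]
    exact Quotient.out_eq _

/-- projections in the colimit theory. -/
def prM {n : ℕ} (i : Fin n) : Mc L n := ofStage L 0 (L.toAlgTheory.pr i)

lemma ofStage_pr {n : ℕ} (k : ℕ) (i : Fin n) :
    ofStage L k (L.toAlgTheory.pr ⟨i.1, by have := i.isLt; omega⟩) = prM L i := by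
  induction k with
  | zero => rfl
  | succ k ih =>
    have h1 : (L.toAlgTheory.pr ⟨i.1, by have := i.isLt; omega⟩ : L.carrier (n + (k+1)))
        = wk L (L.toAlgTheory.pr ⟨i.1, by have := i.isLt; omega⟩ : L.carrier (n + k)) := by
      rw [wk_pr]
    rw [h1, ofStage_wk]
    exact ih

lemma exists_rep_fam {n m : ℕ} (s : Fin n → Mc L m) :
    ∃ (K : ℕ) (u : Fin n → L.carrier (m + K)), ∀ i, s i = ofStage L K (u i) := by
  refine ⟨Finset.univ.sup fun i => (s i).out.1,
    fun i => upTo L (Finset.le_sup (Finset.mem_univ i)) (s i).out.2, fun i => ?_⟩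
  rw [ofStage_upTo]
  exact (Quotient.out_eq _).symm

lemma bump {n k K : ℕ} (h : k ≤ K) {x : Mc L n} {t : L.carrier (n + k)}
    (hx : x = ofStage L k t) : x = ofStage L K (upTo L h t) := by
  rw [ofStage_upTo]; exact hx

end Ops
section AlgM

variable (L : LambdaTheory)

lemma polySubst_assoc {n m p K : ℕ} (t : L.carrier (n + K)) (u : Fin n → L.carrier (m + K))
    (v : Fin m → L.carrier (p + K)) :
    polySubst L (polySubst L t u) v = polySubst L t (fun i => polySubst L (u i) v) := by
  unfold polySubst
  rw [L.subst_assoc]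
  congr 1
  funext q
  unfold polyExt
  by_cases h : q.1 < n
  · rw [dif_pos h, dif_pos h]
  · rw [dif_neg h, dif_neg h, L.pr_subst]
    rw [dif_neg (by omega : ¬ m + (q.1 - n) < m)]
    congr 1
    apply Fin.ext
    show p + (m + (q.1 - n) - m) = p + (q.1 - n)
    omega

lemma polyExt_pr {n m K : ℕ} (f : Fin n → Fin (m + K)) :
    polyExt L (fun i => L.toAlgTheory.pr (f i)) = fun q =>
      if h : q.1 < n then L.toAlgTheory.pr (f ⟨q.1, h⟩)
      else L.toAlgTheory.pr ⟨m + (q.1 - n), by have := q.isLt; omega⟩ := by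
  funext q
  unfold polyExt
  split_ifs <;> rfl

/-- the colimit algebraic theory. -/
noncomputable def Malg : AlgTheory where
  carrier := Mc L
  pr := prM L
  subst := substM L
  pr_subst := by
    intro n m i s
    show substM L (prM L i) s = s i
    obtain ⟨K, u, hu⟩ := exists_rep_fam L s
    have hs : s = fun j => ofStage L K (u j) := funext hu
    rw [hs, ← ofStage_pr L K i, substM_ofStage]
    have hp : polySubst L (L.toAlgTheory.pr ⟨i.1, by have := i.isLt; omega⟩) u = u i := by
      unfold polySubst
      rw [L.pr_subst]
      unfold polyExt
      rw [dif_pos i.isLt]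
    rw [hp]
  subst_pr := by
    intro n x
    show substM L x (fun i => prM L i) = x
    obtain ⟨k, t, hx⟩ := exists_rep L x
    rw [hx]
    have hp : (fun i => prM L i : Fin n → Mc L n)
        = fun i => ofStage L k (L.toAlgTheory.pr ⟨i.1, by have := i.isLt; omega⟩) :=
      funext fun i => (ofStage_pr L k i).symm
    rw [hp, substM_ofStage]
    have h2 : polySubst L t
        (fun i : Fin n => L.toAlgTheory.pr ⟨i.1, by have := i.isLt; omega⟩) = t := by
      unfold polySubst
      have h3 : polyExt L
          (fun i : Fin n => (L.toAlgTheory.pr ⟨i.1, by have := i.isLt; omega⟩ :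
            L.carrier (n + k))) = L.toAlgTheory.pr := by
        funext q
        unfold polyExt
        split_ifs with h
        · congr 1
        · congr 1
          apply Fin.ext
          show n + (q.1 - n) = q.1
          omega
      rw [h3, L.subst_pr]
    rw [h2]
  subst_assoc := by
    intro n m p x s r
    show substM L (substM L x s) r = substM L x (fun i => substM L (s i) r)
    obtain ⟨k, t, hx⟩ := exists_rep L x
    obtain ⟨K₂, u0, hu⟩ := exists_rep_fam L s
    obtain ⟨K₃, v0, hv⟩ := exists_rep_fam L r
    have h1 : k ≤ max k (max K₂ K₃) := le_max_left _ _
    have h2 : K₂ ≤ max k (max K₂ K₃) := (le_max_left _ _).trans (le_max_right _ _)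
    have h3 : K₃ ≤ max k (max K₂ K₃) := (le_max_right _ _).trans (le_max_right _ _)
    have hx' : x = ofStage L _ (upTo L h1 t) := bump L h1 hx
    have hu' : s = fun i => ofStage L _ (upTo L h2 (u0 i)) :=
      funext fun i => bump L h2 (hu i)
    have hv' : r = fun i => ofStage L _ (upTo L h3 (v0 i)) :=
      funext fun i => bump L h3 (hv i)
    rw [hx', hu', hv']
    rw [substM_ofStage]
    rw [substM_ofStage]
    have hinner : (fun i => substM L (ofStage L _ (upTo L h2 (u0 i)))
        (fun j => ofStage L _ (upTo L h3 (v0 j))))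
        = fun i => ofStage L _ (polySubst L (upTo L h2 (u0 i)) (fun j => upTo L h3 (v0 j))) :=
      funext fun i => substM_ofStage L _ _
    rw [hinner, substM_ofStage]
    rw [polySubst_assoc]

/-- action of renaming on the colimit theory, stage-wise. -/
def stageMap {a b K : ℕ} (f : Fin a → Fin b) : Fin (a + K) → Fin (b + K) :=
  fun q => if h : q.1 < a then ⟨(f ⟨q.1, h⟩).1, by have := (f ⟨q.1, h⟩).isLt; omega⟩
           else ⟨b + (q.1 - a), by have := q.isLt; omega⟩

lemma renameM_ofStage {a b K : ℕ} (f : Fin a → Fin b) (t : L.carrier (a + K)) :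
    (Malg L).rename f (ofStage L K t)
      = ofStage L K (L.toAlgTheory.rename (stageMap (K := K) f) t) := by
  show substM L (ofStage L K t) (fun i => prM L (f i)) = _
  have hp : (fun i => prM L (f i))
      = fun i => ofStage L K (L.toAlgTheory.pr ⟨(f i).1, by have := (f i).isLt; omega⟩) :=
    funext fun i => (ofStage_pr L K (f i)).symm
  rw [hp, substM_ofStage]
  congr 1
  unfold polySubst AlgTheory.rename
  congr 1
  funext q
  unfold polyExt stageMap
  split_ifs with h
  · rfl
  · rfl

end AlgM
section LamM

variable (L : LambdaTheory)

lemma extendD_val {a b : ℕ} (f : Fin a → Fin b) (p : Fin (a + 1)) :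
    (extendD f p).1 = if h : p.1 < a then (f ⟨p.1, h⟩).1 else b := by
  unfold extendD; split_ifs <;> rfl

lemma stageMap_val {a b K : ℕ} (f : Fin a → Fin b) (q : Fin (a + K)) :
    (stageMap (K := K) f q).1 = if h : q.1 < a then (f ⟨q.1, h⟩).1 else b + (q.1 - a) := by
  unfold stageMap; split_ifs <;> rfl

lemma pr_congr {a : ℕ} {i j : Fin a} (h : i.1 = j.1) :
    L.toAlgTheory.pr i = L.toAlgTheory.pr j := congrArg _ (Fin.ext h)

lemma polyExt_lt {n m K : ℕ} (u : Fin n → L.carrier (m + K)) {r : Fin (n + K)} {i : Fin n}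
    (h : r.1 = i.1) : polyExt L u r = u i := by
  unfold polyExt
  rw [dif_pos (show r.1 < n by rw [h]; exact i.isLt)]
  congr 1
  exact Fin.ext h

lemma polyExt_ge {n m K : ℕ} (u : Fin n → L.carrier (m + K)) {r : Fin (n + K)}
    (h : ¬ r.1 < n) :
    polyExt L u r = L.toAlgTheory.pr ⟨m + (r.1 - n), by have := r.isLt; omega⟩ := by
  unfold polyExt
  rw [dif_neg h]

/-- moving the fresh block past a new bound variable. -/
def piF (n k : ℕ) : Fin ((n + k) + 1) → Fin ((n + 1) + k) := fun p =>
  ⟨if p.1 < n then p.1 else if p.1 = n + k then n else p.1 + 1,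
    by have := p.isLt; split_ifs <;> omega⟩

def piInv (n k : ℕ) : Fin ((n + 1) + k) → Fin ((n + k) + 1) := fun p =>
  ⟨if p.1 < n then p.1 else if p.1 = n then n + k else p.1 - 1,
    by have := p.isLt; split_ifs <;> omega⟩

def rhoS (n k : ℕ) (t : L.carrier (n + k)) : L.carrier ((n + 1) + k) :=
  L.toAlgTheory.rename (piF n k) (L.rho t)

def absS (n k : ℕ) (u : L.carrier ((n + 1) + k)) : L.carrier (n + k) :=
  L.abs (L.toAlgTheory.rename (piInv n k) u)

lemma rhoS_absS (n k : ℕ) (v : L.carrier ((n + 1) + k)) :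
    rhoS L n k (absS L n k v) = v := by
  unfold rhoS absS
  rw [L.rho_abs, rename_rename]
  apply rename_id
  intro p
  apply Fin.ext
  show (piF n k (piInv n k p)).1 = p.1
  have hp := p.isLt
  simp only [piF, piInv]
  split_ifs <;> omega

lemma rhoS_zero (n : ℕ) (t : L.carrier n) : rhoS L n 0 t = L.rho t := by
  unfold rhoS
  apply rename_id
  intro p
  apply Fin.ext
  have hp := p.isLt
  simp only [piF]
  split_ifs <;> omega

lemma absS_zero (n : ℕ) (u : L.carrier (n + 1)) : absS L n 0 u = L.abs u := by
  unfold absS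
  congr 1
  apply rename_id
  intro p
  apply Fin.ext
  have hp := p.isLt
  simp only [piInv]
  split_ifs <;> omega

lemma rhoS_wk (n k : ℕ) (t : L.carrier (n + k)) :
    rhoS L n (k + 1) (wk L t) = wk L (rhoS L n k t) := by
  unfold rhoS wk
  rw [rho_rename, rename_rename, rename_rename]
  apply rename_ext
  intro p
  apply Fin.ext
  have hp := p.isLt
  show (piF n (k + 1) (extendD Fin.castSucc p)).1 = (Fin.castSucc (piF n k p)).1
  simp only [Nat.add_eq] at hp
  simp only [piF, extendD_val, Fin.coe_castSucc, dite_eq_ite, Nat.add_eq]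
  split_ifs <;> omega

lemma absS_wk (n k : ℕ) (u : L.carrier ((n + 1) + k)) :
    absS L n (k + 1) (wk L u) = wk L (absS L n k u) := by
  unfold absS wk
  rw [abs_rename L (Fin.castSucc) (L.toAlgTheory.rename (piInv n k) u), rename_rename,
    rename_rename]
  congr 1
  apply rename_ext
  intro p
  apply Fin.ext
  have hp := p.isLt
  show (piInv n (k + 1) (Fin.castSucc p)).1 = (extendD Fin.castSucc (piInv n k p)).1
  simp only [Nat.add_eq] at hp
  simp only [piInv, extendD_val, Fin.coe_castSucc, dite_eq_ite, Nat.add_eq]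
  split_ifs <;> omega

lemma rhoS_upN (n k : ℕ) (j : ℕ) (t : L.carrier (n + k)) :
    rhoS L n (k + j) (upN L j t) = upN L j (rhoS L n k t) := by
  induction j with
  | zero => rfl
  | succ j ih =>
    show rhoS L n ((k + j) + 1) (wk L (upN L j t)) = wk L (upN L j (rhoS L n k t))
    rw [rhoS_wk, ih]

lemma absS_upN (n k : ℕ) (j : ℕ) (u : L.carrier ((n + 1) + k)) :
    absS L n (k + j) (upN L j u) = upN L j (absS L n k u) := by
  induction j with
  | zero => rfl
  | succ j ih =>
    show absS L n ((k + j) + 1) (wk L (upN L j u)) = wk L (upN L j (absS L n k u))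
    rw [absS_wk, ih]

noncomputable def rhoM {n : ℕ} (x : Mc L n) : Mc L (n + 1) :=
  ofStage L x.out.1 (rhoS L n x.out.1 x.out.2)

noncomputable def absM {n : ℕ} (x : Mc L (n + 1)) : Mc L n :=
  ofStage L x.out.1 (absS L n x.out.1 x.out.2)

lemma rhoM_ofStage {n k : ℕ} (t : L.carrier (n + k)) :
    rhoM L (ofStage L k t) = ofStage L k (rhoS L n k t) := by
  set x := ofStage L k t with hx
  have h : ofStage L x.out.1 x.out.2 = ofStage L k t := Quotient.out_eq x
  have hsig : (⟨x.out.1 + k, upN L k x.out.2⟩ : S L n) = ⟨k + x.out.1, upN L x.out.1 t⟩ :=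
    ofStage_exact L k x.out.1 (Nat.add_comm _ _) h
  calc rhoM L x = ofStage L x.out.1 (rhoS L n x.out.1 x.out.2) := rfl
    _ = ofStage L (x.out.1 + k) (upN L k (rhoS L n x.out.1 x.out.2)) :=
        (ofStage_upN L k _).symm
    _ = ofStage L (x.out.1 + k) (rhoS L n (x.out.1 + k) (upN L k x.out.2)) := by
        rw [rhoS_upN]
    _ = ofStage L (k + x.out.1) (rhoS L n (k + x.out.1) (upN L x.out.1 t)) :=
        congrArg (fun p : S L n => ofStage L p.1 (rhoS L n p.1 p.2)) hsig
    _ = ofStage L (k + x.out.1) (upN L x.out.1 (rhoS L n k t)) := by rw [rhoS_upN]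
    _ = ofStage L k (rhoS L n k t) := ofStage_upN L _ _

lemma absM_ofStage {n k : ℕ} (u : L.carrier ((n + 1) + k)) :
    absM L (ofStage L k u) = ofStage L k (absS L n k u) := by
  set x := ofStage L (n := n + 1) k u with hx
  have h : ofStage L x.out.1 x.out.2 = ofStage L k u := Quotient.out_eq x
  have hsig : (⟨x.out.1 + k, upN L k x.out.2⟩ : S L (n + 1)) = ⟨k + x.out.1, upN L x.out.1 u⟩ :=
    ofStage_exact L k x.out.1 (Nat.add_comm _ _) h
  calc absM L x = ofStage L x.out.1 (absS L n x.out.1 x.out.2) := rfl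
    _ = ofStage L (x.out.1 + k) (upN L k (absS L n x.out.1 x.out.2)) :=
        (ofStage_upN L k _).symm
    _ = ofStage L (x.out.1 + k) (absS L n (x.out.1 + k) (upN L k x.out.2)) := by
        rw [absS_upN]
    _ = ofStage L (k + x.out.1) (absS L n (k + x.out.1) (upN L x.out.1 u)) :=
        congrArg (fun p : S L (n + 1) => ofStage L p.1 (absS L n p.1 p.2)) hsig
    _ = ofStage L (k + x.out.1) (upN L x.out.1 (absS L n k u)) := by rw [absS_upN]
    _ = ofStage L k (absS L n k u) := ofStage_upN L _ _

/-- the stage-wise description of `lift` in the colimit theory. -/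
def liftS (n m K : ℕ) (u : Fin n → L.carrier (m + K)) :
    Fin (n + 1) → L.carrier ((m + 1) + K) :=
  fun q => if h : q.1 < n
    then L.toAlgTheory.rename (stageMap (K := K) (Fin.castSucc : Fin m → Fin (m + 1))) (u ⟨q.1, h⟩)
    else L.toAlgTheory.pr ⟨m, by omega⟩

lemma liftM_char {n m K : ℕ} (s : Fin n → Mc L m) (u : Fin n → L.carrier (m + K))
    (hu : ∀ i, s i = ofStage L K (u i)) (q : Fin (n + 1)) :
    AlgTheory.lift (Malg L) s q = ofStage L K (liftS L n m K u q) := by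
  refine (lift_dite (Malg L) s q).trans ?_
  unfold liftS
  split_ifs with h
  · rw [hu ⟨q.1, h⟩]
    exact renameM_ofStage L Fin.castSucc (u ⟨q.1, h⟩)
  · exact (ofStage_pr L K (Fin.last m)).symm
lemma liftS_lt {n m K : ℕ} (u : Fin n → L.carrier (m + K)) {q : Fin (n + 1)} {i : Fin n}
    (h : q.1 = i.1) :
    liftS L n m K u q
      = L.toAlgTheory.rename (stageMap (K := K) (Fin.castSucc : Fin m → Fin (m + 1))) (u i) := by
  have hql : q.1 < n := by rw [h]; exact i.isLt
  unfold liftS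
  rw [dif_pos hql]
  have he : (⟨q.1, hql⟩ : Fin n) = i := Fin.ext h
  rw [he]

lemma liftS_ge {n m K : ℕ} (u : Fin n → L.carrier (m + K)) {q : Fin (n + 1)}
    (h : ¬ q.1 < n) :
    liftS L n m K u q = L.toAlgTheory.pr ⟨m, by omega⟩ := by
  unfold liftS
  rw [dif_neg h]

lemma polyRho {n m K : ℕ} (t : L.carrier (n + K)) (u : Fin n → L.carrier (m + K)) :
    polySubst L (n := n + 1) (m := m + 1) (K := K) (rhoS L n K t) (liftS L n m K u)
      = rhoS L m K (polySubst L t u) := by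
  unfold polySubst rhoS
  rw [subst_rename, ← L.rho_subst, rename_subst]
  congr 1
  funext q
  rw [lift_dite]
  have hq := q.isLt
  by_cases h1 : q.1 < n
  · have hv : (piF n K q).1 = q.1 := by simp [piF, h1]
    have hc : q.1 < n + K := by omega
    rw [dif_pos hc]
    rw [polyExt_lt L (liftS L n m K u) (r := piF n K q) (i := ⟨q.1, by omega⟩) hv]
    rw [liftS_lt L u (q := (⟨q.1, by omega⟩ : Fin (n + 1))) (i := ⟨q.1, h1⟩) rfl]
    rw [polyExt_lt L u (r := (⟨q.1, hc⟩ : Fin (n + K))) (i := ⟨q.1, h1⟩) rfl]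
    rw [rename_rename]
    apply rename_ext
    intro r
    apply Fin.ext
    have hr := r.isLt
    simp only [stageMap_val, piF, Fin.coe_castSucc, dite_eq_ite, Nat.add_eq]
    split_ifs <;> omega
  · by_cases h2 : q.1 = n + K
    · have hv : (piF n K q).1 = n := by simp [piF, h1, h2]
      rw [dif_neg (show ¬ q.1 < n + K by omega)]
      rw [polyExt_lt L (liftS L n m K u) (r := piF n K q) (i := ⟨n, by omega⟩) hv]
      rw [liftS_ge L u (q := (⟨n, by omega⟩ : Fin (n + 1))) (by simp)]
      rw [rename_pr]
      apply pr_congr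
      simp only [piF, Fin.val_last, Nat.add_eq]
      split_ifs <;> omega
    · have hv : (piF n K q).1 = q.1 + 1 := by simp [piF, h1, h2]
      have hc : q.1 < n + K := by omega
      rw [dif_pos hc]
      rw [polyExt_ge L (liftS L n m K u) (r := piF n K q) (by omega)]
      rw [polyExt_ge L u (r := (⟨q.1, hc⟩ : Fin (n + K))) (by simpa using h1)]
      rw [rename_rename, rename_pr]
      apply pr_congr
      simp only [piF, Fin.coe_castSucc, Nat.add_eq]
      split_ifs <;> omega

lemma polyAbs {n m K : ℕ} (v : L.carrier ((n + 1) + K)) (u : Fin n → L.carrier (m + K)) :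
    polySubst L (n := n) (m := m) (K := K) (absS L n K v) u
      = absS L m K (polySubst L (n := n + 1) (m := m + 1) (K := K) v (liftS L n m K u)) := by
  unfold polySubst absS
  rw [L.abs_subst, subst_rename, rename_subst]
  congr 2
  funext p
  rw [lift_dite]
  have hp := p.isLt
  by_cases h1 : p.1 < n
  · have hv : (piInv n K p).1 = p.1 := by simp [piInv, h1]
    have hc : (piInv n K p).1 < n + K := by omega
    rw [dif_pos hc]
    rw [polyExt_lt L u (r := (⟨(piInv n K p).1, hc⟩ : Fin (n + K))) (i := ⟨p.1, h1⟩) hv]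
    rw [polyExt_lt L (liftS L n m K u) (r := p) (i := (⟨p.1, by omega⟩ : Fin (n + 1))) rfl]
    rw [liftS_lt L u (q := (⟨p.1, by omega⟩ : Fin (n + 1))) (i := ⟨p.1, h1⟩) rfl]
    rw [rename_rename]
    apply rename_ext
    intro r
    apply Fin.ext
    have hr := r.isLt
    simp only [piInv, stageMap_val, Fin.coe_castSucc, dite_eq_ite, Nat.add_eq]
    split_ifs <;> omega
  · by_cases h2 : p.1 = n
    · have hv : (piInv n K p).1 = n + K := by simp [piInv, h1, h2]
      rw [dif_neg (show ¬ (piInv n K p).1 < n + K by omega)]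
      rw [polyExt_lt L (liftS L n m K u) (r := p) (i := (⟨n, by omega⟩ : Fin (n + 1))) h2]
      rw [liftS_ge L u (q := (⟨n, by omega⟩ : Fin (n + 1))) (by simp)]
      rw [rename_pr]
      apply pr_congr
      simp only [piInv, Fin.val_last, Nat.add_eq]
      split_ifs <;> omega
    · have hv : (piInv n K p).1 = p.1 - 1 := by simp [piInv, h1, h2]
      have hc : (piInv n K p).1 < n + K := by omega
      rw [dif_pos hc]
      rw [polyExt_ge L u (r := (⟨(piInv n K p).1, hc⟩ : Fin (n + K))) (by simpa using by omega : ¬ (piInv n K p).1 < n)]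
      rw [polyExt_ge L (liftS L n m K u) (r := p) (show ¬ p.1 < n + 1 by omega)]
      rw [rename_pr, rename_pr]
      apply pr_congr
      simp only [piInv, Fin.coe_castSucc, Nat.add_eq]
      split_ifs <;> omega
/-- the colimit λ-theory. -/
noncomputable def Mlam : LambdaTheory where
  toAlgTheory := Malg L
  rho := rhoM L
  abs := absM L
  rho_abs := by
    intro n x
    show rhoM L (absM L x) = x
    obtain ⟨k, v, hx⟩ := exists_rep L x
    rw [hx, absM_ofStage, rhoM_ofStage, rhoS_absS]
  rho_subst := by
    intro n m x s
    show substM L (rhoM L x) (AlgTheory.lift (Malg L) s) = rhoM L (substM L x s)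
    obtain ⟨k, t0, hx⟩ := exists_rep L x
    obtain ⟨K₂, u0, hu⟩ := exists_rep_fam L s
    have h1 : k ≤ max k K₂ := le_max_left _ _
    have h2 : K₂ ≤ max k K₂ := le_max_right _ _
    have hx' : x = ofStage L (max k K₂) (upTo L h1 t0) := bump L h1 hx
    have hu' : ∀ i, s i = ofStage L (max k K₂) (upTo L h2 (u0 i)) := fun i => bump L h2 (hu i)
    have hl : AlgTheory.lift (Malg L) s
        = fun q => ofStage L (max k K₂) (liftS L n m _ (fun i => upTo L h2 (u0 i)) q) :=
      funext (liftM_char L s _ hu')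
    rw [hx', hl, rhoM_ofStage, substM_ofStage, polyRho]
    rw [show s = fun i => ofStage L (max k K₂) (upTo L h2 (u0 i)) from funext hu']
    rw [substM_ofStage, rhoM_ofStage]
  abs_subst := by
    intro n m x s
    show substM L (absM L x) s = absM L (substM L x (AlgTheory.lift (Malg L) s))
    obtain ⟨k, v0, hx⟩ := exists_rep L x
    obtain ⟨K₂, u0, hu⟩ := exists_rep_fam L s
    have h1 : k ≤ max k K₂ := le_max_left _ _
    have h2 : K₂ ≤ max k K₂ := le_max_right _ _
    have hx' : x = ofStage L (max k K₂) (upTo L h1 v0) := bump L h1 hx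
    have hu' : ∀ i, s i = ofStage L (max k K₂) (upTo L h2 (u0 i)) := fun i => bump L h2 (hu i)
    have hl : AlgTheory.lift (Malg L) s
        = fun q => ofStage L (max k K₂) (liftS L n m _ (fun i => upTo L h2 (u0 i)) q) :=
      funext (liftM_char L s _ hu')
    rw [hx', hl, absM_ofStage]
    rw [show s = fun i => ofStage L (max k K₂) (upTo L h2 (u0 i)) from funext hu']
    rw [substM_ofStage, substM_ofStage, absM_ofStage, polyAbs]

/-- the canonical embedding. -/
noncomputable def Fhom : LambdaTheoryHom L (Mlam L) where
  app := fun {n} t => ofStage L 0 t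
  map_pr := fun i => rfl
  map_subst := by
    intro n m t s
    show ofStage L 0 (L.toAlgTheory.subst t s)
      = substM L (ofStage L 0 t) (fun i => ofStage L 0 (s i))
    rw [substM_ofStage]
    congr 1
    unfold polySubst
    congr 1
    funext q
    unfold polyExt
    rw [dif_pos (show q.1 < n from q.isLt)]
  map_rho := by
    intro n t
    show ofStage L 0 (L.rho t) = rhoM L (ofStage L 0 t)
    rw [rhoM_ofStage, rhoS_zero]
  map_abs := by
    intro n u
    show ofStage L 0 (L.abs u) = absM L (ofStage L 0 u)
    rw [absM_ofStage, absS_zero]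

lemma upN_eq_rename {n k : ℕ} (j : ℕ) (t : L.carrier (n + k)) :
    upN L j t = L.toAlgTheory.rename
      (fun p : Fin (n + k) => (⟨p.1, by have := p.isLt; omega⟩ : Fin (n + (k + j)))) t := by
  induction j with
  | zero => exact (rename_id _ (fun p => Fin.ext rfl) t).symm
  | succ j ih =>
    show wk L (upN L j t) = _
    rw [ih]
    unfold wk
    rw [rename_rename]
    apply rename_ext
    intro p
    apply Fin.ext
    rfl

/-- the injective renaming used to verify that the colimit has enough points. -/
def epG (n K : ℕ) : Fin (n + K) → Fin (0 + (K + n)) :=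
  fun p => ⟨if p.1 < n then K + p.1 else p.1 - n, by have := p.isLt; split_ifs <;> omega⟩

lemma epG_inj (n K : ℕ) : Function.Injective (epG n K) := by
  intro p q h
  have hv := congrArg Fin.val h
  simp only [epG] at hv
  have h1 := p.isLt
  have h2 := q.isLt
  apply Fin.ext
  split_ifs at hv <;> omega

/-- the tuple of constants used to verify enough points. -/
def epC (n K : ℕ) : Fin n → L.carrier (0 + (K + n)) :=
  fun i => L.toAlgTheory.pr ⟨K + i.1, by have := i.isLt; omega⟩

lemma polySubst_epC {n K : ℕ} (B : L.carrier (n + K)) :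
    polySubst L (n := n) (m := 0) (K := K + n) (upN L n B) (epC L n K)
      = L.toAlgTheory.rename (epG n K) B := by
  unfold polySubst
  rw [upN_eq_rename, subst_rename]
  conv_rhs => unfold AlgTheory.rename
  congr 1
  funext p
  by_cases hpn : p.1 < n
  · rw [polyExt_lt L (epC L n K)
      (r := (⟨p.1, by have := p.isLt; omega⟩ : Fin (n + (K + n)))) (i := ⟨p.1, hpn⟩) rfl]
    unfold epC
    apply pr_congr
    simp only [epG]
    split_ifs <;> omega
  · rw [polyExt_ge L (epC L n K)
      (r := (⟨p.1, by have := p.isLt; omega⟩ : Fin (n + (K + n)))) (by simpa using hpn)]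
    apply pr_congr
    simp only [epG]
    split_ifs <;> omega

lemma hasEP : (Malg L).HasEnoughPoints := by
  intro n x y h
  obtain ⟨k, a, hx⟩ := exists_rep L x
  obtain ⟨k', a', hy⟩ := exists_rep L y
  have h1 : k ≤ max k k' := le_max_left _ _
  have h2 : k' ≤ max k k' := le_max_right _ _
  have hx' : x = ofStage L (max k k') (upTo L h1 a) := bump L h1 hx
  have hy' : y = ofStage L (max k k') (upTo L h2 a') := bump L h2 hy
  have hc : substM L x (fun i => ofStage L (max k k' + n) (epC L n (max k k') i))
      = substM L y (fun i => ofStage L (max k k' + n) (epC L n (max k k') i)) :=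
    h _
  have hxK : x = ofStage L (max k k' + n) (upN L n (upTo L h1 a)) := by
    rw [ofStage_upN]; exact hx'
  have hyK : y = ofStage L (max k k' + n) (upN L n (upTo L h2 a')) := by
    rw [ofStage_upN]; exact hy'
  rw [hxK, hyK, substM_ofStage, substM_ofStage] at hc
  have hc2 := ofStage_inj L hc
  rw [polySubst_epC, polySubst_epC] at hc2
  have hA : upTo L h1 a = upTo L h2 a' := rename_inj L (epG_inj n (max k k')) hc2
  rw [hx', hy', hA]

end LamM

/-- STATEMENT 11: every λ-theory admits a componentwise injective map of
λ-theories into a λ-theory with enough points. -/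
theorem embeds_in_enough_points (L : LambdaTheory) :
    ∃ (M : LambdaTheory) (F : LambdaTheoryHom L M),
      M.toAlgTheory.HasEnoughPoints ∧
        ∀ n : ℕ, Function.Injective fun t : L.carrier n => F.app t := by
  refine ⟨Mlam L, Fhom L, hasEP L, ?_⟩
  intro n t t' h
  exact ofStage_inj L h
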